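/- Let X be a transitive d-dimensional shift of maximality type 1 that is not of finite type. Then X is an isolated point of the space T^d of transitive d-dimensional shifts if and only if there exists a shift of finite type Z with X ⊆ Z such that Z \ X is not dense in Z. -/

import Mathlib

/-- The group `ℤ^d`. -/
abbrev ZD (d : ℕ) := Fin d → ℤ

/-- A configuration is a map `ℤ^d → ℤ`. -/
abbrev Config (d : ℕ) := ZD d → ℤ

/-- The shift map `σ^u`, defined by `σ^u(x)_v = x_{u+v}`. -/
def shiftMap {d : ℕ} (u : ZD d) (x : Config d) : Config d := fun v => x (u + v)

/-- The sup norm `‖·‖_∞` on `ℤ^d`, valued in `ℕ`. -/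
def normInf {d : ℕ} (n : ZD d) : ℕ := Finset.univ.sup fun i => (n i).natAbs

open Classical in
/-- The metric `δ` on configurations: `δ(x,y) = 2^{-min{‖n‖_∞ : x_n ≠ y_n}}`, `δ(x,x) = 0`. -/
noncomputable def deltaDist {d : ℕ} (x y : Config d) : ℝ :=
  if x = y then 0
  else (2 : ℝ) ^ (-((sInf {m : ℕ | ∃ n : ZD d, normInf n = m ∧ x n ≠ y n} : ℕ) : ℤ))

/-- The closure of a set of configurations with respect to the metric `δ`. -/
def deltaClosure {d : ℕ} (A : Set (Config d)) : Set (Config d) :=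
  {x | ∀ ε : ℝ, 0 < ε → ∃ a ∈ A, deltaDist x a < ε}

/-- A set of configurations is closed for `δ` when it contains all its limit points. -/
def IsDeltaClosed {d : ℕ} (A : Set (Config d)) : Prop := deltaClosure A ⊆ A

/-- A `d`-dimensional shift: a nonempty set of configurations over a common finite
alphabet, closed for `δ` and invariant under every shift map. -/
def IsShift {d : ℕ} (X : Set (Config d)) : Prop :=
  X.Nonempty ∧ (∃ A : Finset ℤ, ∀ x ∈ X, ∀ v : ZD d, x v ∈ A) ∧ IsDeltaClosed X ∧
    ∀ u : ZD d, ∀ x ∈ X, shiftMap u x ∈ X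

/-- The Hausdorff metric `δ_H` on the space of shifts. -/
noncomputable def deltaH {d : ℕ} (X Z : Set (Config d)) : ℝ :=
  max (⨆ x : X, ⨅ z : Z, deltaDist (x : Config d) (z : Config d))
      (⨆ z : Z, ⨅ x : X, deltaDist (x : Config d) (z : Config d))

/-- A subsystem of a shift `X`: a nonempty closed shift-invariant subset of `X`. -/
def IsSubsystem {d : ℕ} (Z X : Set (Config d)) : Prop :=
  Z.Nonempty ∧ Z ⊆ X ∧ IsDeltaClosed Z ∧ ∀ u : ZD d, ∀ z ∈ Z, shiftMap u z ∈ Z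

/-- A maximal subsystem of `X`: a proper subsystem such that any subsystem strictly
between it and `X` equals `X`. -/
def IsMaximalSubsystem {d : ℕ} (Z X : Set (Config d)) : Prop :=
  IsSubsystem Z X ∧ Z ≠ X ∧ ∀ Z', IsSubsystem Z' X → Z ⊂ Z' → Z' = X

/-- An outcast of `X`: a proper subsystem contained in no maximal subsystem of `X`. -/
def IsOutcast {d : ℕ} (Z X : Set (Config d)) : Prop :=
  IsSubsystem Z X ∧ Z ≠ X ∧ ∀ M, IsMaximalSubsystem M X → ¬ Z ⊆ M

/-- A pattern with finite support `U` (given by the values of `p` on `U`) appears in the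
configuration `x`. -/
def PatternAppears {d : ℕ} (U : Finset (ZD d)) (p : ZD d → ℤ) (x : Config d) : Prop :=
  ∃ u : ZD d, ∀ v ∈ U, x (u + v) = p v

/-- The set of configurations over the alphabet `A` avoiding every pattern in `F`. -/
def XofF {d : ℕ} (A : Finset ℤ) (F : Set (Finset (ZD d) × (ZD d → ℤ))) : Set (Config d) :=
  {x | (∀ v : ZD d, x v ∈ A) ∧ ∀ q ∈ F, ¬ PatternAppears q.1 q.2 x}

/-- A shift of finite type: defined by a finite alphabet and a finite set of forbidden
patterns. -/
def IsSFT {d : ℕ} (X : Set (Config d)) : Prop :=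
  ∃ (A : Finset ℤ) (F : Finset (Finset (ZD d) × (ZD d → ℤ))), X = XofF A (F : Set _)

/-- `X` is an isolated point of the subspace `S` (with the Hausdorff metric `δ_H`). -/
def IsolatedIn {d : ℕ} (S : Set (Set (Config d))) (X : Set (Config d)) : Prop :=
  X ∈ S ∧ ∃ ε : ℝ, 0 < ε ∧ ∀ Z ∈ S, deltaH X Z < ε → Z = X

/-- The orbit of a configuration under the shift action. -/
def orbit {d : ℕ} (x : Config d) : Set (Config d) := {y | ∃ u : ZD d, y = shiftMap u x}

/-- A shift is transitive when some point has dense orbit. -/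
def IsTransitive {d : ℕ} (X : Set (Config d)) : Prop :=
  IsShift X ∧ ∃ x ∈ X, X ⊆ deltaClosure (orbit x)

/-- A shift is minimal when its only subsystem is itself. -/
def IsMinimalShift {d : ℕ} (X : Set (Config d)) : Prop :=
  IsShift X ∧ ∀ Z, IsSubsystem Z X → Z = X

-- basic lemmas
lemma deltaDist_nonneg {d : ℕ} (x y : Config d) : 0 ≤ deltaDist x y := by
  unfold deltaDist; split
  · norm_num
  · positivity

lemma deltaDist_self {d : ℕ} (x : Config d) : deltaDist x x = 0 := by
  unfold deltaDist; simp

lemma deltaDist_le_one {d : ℕ} (x y : Config d) : deltaDist x y ≤ 1 := by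
  unfold deltaDist; split
  · norm_num
  · calc (2:ℝ) ^ (-((sInf {m : ℕ | ∃ n : ZD d, normInf n = m ∧ x n ≠ y n} : ℕ) : ℤ))
        ≤ (2:ℝ) ^ (0:ℤ) := by
          apply zpow_le_zpow_right₀ one_le_two
          simp
    _ = 1 := by norm_num

def agreeOn {d : ℕ} (N : ℕ) (x y : Config d) : Prop := ∀ n : ZD d, normInf n ≤ N → x n = y n

lemma agree_of_dist_lt {d : ℕ} {N : ℕ} {x y : Config d}
    (h : deltaDist x y < (2:ℝ) ^ (-(N:ℤ))) : agreeOn N x y := by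
  intro n hn
  by_contra hne
  have hxy : x ≠ y := fun he => hne (by rw [he])
  rw [deltaDist, if_neg hxy] at h
  set S := {m : ℕ | ∃ n : ZD d, normInf n = m ∧ x n ≠ y n} with hS
  have hmem : normInf n ∈ S := ⟨n, rfl, hne⟩
  have h1 : (-((sInf S:ℕ):ℤ)) < (-(N:ℤ)) := by
    exact (zpow_lt_zpow_iff_right₀ one_lt_two).mp h
  have h2 : sInf S ≤ normInf n := Nat.sInf_le hmem
  omega

lemma dist_le_of_agree {d : ℕ} {N : ℕ} {x y : Config d}
    (h : agreeOn N x y) : deltaDist x y ≤ (2:ℝ) ^ (-(N+1:ℤ)) := by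
  rw [deltaDist]
  split
  · positivity
  · rename_i hxy
    set S := {m : ℕ | ∃ n : ZD d, normInf n = m ∧ x n ≠ y n} with hS
    have hne : S.Nonempty := by
      have : ∃ n, x n ≠ y n := by
        by_contra hc
        push_neg at hc
        exact hxy (funext hc)
      obtain ⟨n, hn⟩ := this
      exact ⟨normInf n, n, rfl, hn⟩
    obtain ⟨n0, hn0, hne0⟩ := Nat.sInf_mem hne
    have hlt : N < sInf S := by
      by_contra hc
      push_neg at hc
      exact hne0 (h n0 (by omega))
    apply zpow_le_zpow_right₀ one_le_two
    omega

lemma dist_lt_of_agree {d : ℕ} {N : ℕ} {x y : Config d}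
    (h : agreeOn N x y) : deltaDist x y < (2:ℝ) ^ (-(N:ℤ)) := by
  calc deltaDist x y ≤ (2:ℝ) ^ (-(N+1:ℤ)) := dist_le_of_agree h
  _ < (2:ℝ) ^ (-(N:ℤ)) := by
      apply zpow_lt_zpow_right₀ one_lt_two
      omega

lemma exists_two_zpow_lt (ε : ℝ) (hε : 0 < ε) : ∃ N : ℕ, (2:ℝ) ^ (-(N:ℤ)) < ε := by
  obtain ⟨N, hN⟩ := exists_pow_lt_of_lt_one hε (by norm_num : (1/2 : ℝ) < 1)
  refine ⟨N, ?_⟩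
  have : ((1:ℝ)/2) ^ N = (2:ℝ) ^ (-(N:ℤ)) := by
    rw [zpow_neg, zpow_natCast]
    simp [one_div, inv_pow]
  linarith [this ▸ hN]

lemma mem_deltaClosure_iff {d : ℕ} {A : Set (Config d)} {x : Config d} :
    x ∈ deltaClosure A ↔ ∀ N : ℕ, ∃ a ∈ A, agreeOn N x a := by
  constructor
  · intro h N
    obtain ⟨a, ha, hd⟩ := h ((2:ℝ) ^ (-(N:ℤ))) (by positivity)
    exact ⟨a, ha, agree_of_dist_lt hd⟩
  · intro h ε hε
    obtain ⟨N, hN⟩ := exists_two_zpow_lt ε hε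
    obtain ⟨a, ha, hagree⟩ := h N
    exact ⟨a, ha, lt_trans (dist_lt_of_agree hagree) hN⟩

lemma subset_deltaClosure {d : ℕ} (A : Set (Config d)) : A ⊆ deltaClosure A := by
  intro a ha
  exact mem_deltaClosure_iff.mpr (fun N => ⟨a, ha, fun n _ => rfl⟩)

lemma deltaClosure_mono {d : ℕ} {A B : Set (Config d)} (h : A ⊆ B) :
    deltaClosure A ⊆ deltaClosure B := by
  intro x hx
  rw [mem_deltaClosure_iff] at hx ⊢
  intro N
  obtain ⟨a, ha, hag⟩ := hx N
  exact ⟨a, h ha, hag⟩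

lemma deltaClosure_isClosed {d : ℕ} (A : Set (Config d)) : IsDeltaClosed (deltaClosure A) := by
  intro x hx
  rw [mem_deltaClosure_iff] at hx ⊢
  intro N
  obtain ⟨b, hb, hagb⟩ := hx N
  obtain ⟨a, ha, haga⟩ := mem_deltaClosure_iff.mp hb N
  exact ⟨a, ha, fun n hn => (hagb n hn).trans (haga n hn)⟩

lemma deltaClosure_union {d : ℕ} (A B : Set (Config d)) :
    deltaClosure (A ∪ B) ⊆ deltaClosure A ∪ deltaClosure B := by
  intro x hx
  by_cases hA : x ∈ deltaClosure A
  · exact Or.inl hA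
  · right
    rw [mem_deltaClosure_iff] at hx ⊢
    rw [mem_deltaClosure_iff] at hA
    push_neg at hA
    obtain ⟨N0, hN0⟩ := hA
    intro N
    obtain ⟨a, ha, hag⟩ := hx (max N N0)
    rcases ha with ha | hb
    · exact absurd (fun n hn => hag n (le_trans hn (le_max_right N N0))) (hN0 a ha)
    · exact ⟨a, hb, fun n hn => hag n (le_trans hn (le_max_left N N0))⟩

lemma le_normInf {d : ℕ} (u : ZD d) (i : Fin d) : (u i).natAbs ≤ normInf u :=
  Finset.le_sup (f := fun i => (u i).natAbs) (Finset.mem_univ i)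

lemma normInf_add_le {d : ℕ} (u v : ZD d) : normInf (u + v) ≤ normInf u + normInf v := by
  apply Finset.sup_le
  intro i _
  calc (u i + v i).natAbs ≤ (u i).natAbs + (v i).natAbs := Int.natAbs_add_le _ _
  _ ≤ normInf u + normInf v := by
      exact add_le_add (le_normInf u i) (le_normInf v i)

lemma shiftMap_zero {d : ℕ} (x : Config d) : shiftMap 0 x = x := by
  funext v; simp [shiftMap]

lemma shiftMap_comp {d : ℕ} (u v : ZD d) (x : Config d) :
    shiftMap u (shiftMap v x) = shiftMap (v + u) x := by
  funext w; simp [shiftMap, add_assoc]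

lemma deltaClosure_invariant {d : ℕ} {A : Set (Config d)}
    (hA : ∀ u : ZD d, ∀ a ∈ A, shiftMap u a ∈ A) :
    ∀ u : ZD d, ∀ x ∈ deltaClosure A, shiftMap u x ∈ deltaClosure A := by
  intro u x hx
  rw [mem_deltaClosure_iff] at hx ⊢
  intro N
  obtain ⟨a, ha, hag⟩ := hx (normInf u + N)
  refine ⟨shiftMap u a, hA u a ha, fun n hn => ?_⟩
  exact hag (u + n) (le_trans (normInf_add_le u n) (by omega))

lemma bddBelow_dist {d : ℕ} (x : Config d) (Y : Set (Config d)) :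
    BddBelow (Set.range fun y : Y => deltaDist x (y : Config d)) := by
  exact ⟨0, by rintro r ⟨y, rfl⟩; exact deltaDist_nonneg _ _⟩

lemma deltaH_lt {d : ℕ} {X Y : Set (Config d)} {c ε : ℝ} (hc : 0 ≤ c) (hcε : c < ε)
    (h1 : ∀ x ∈ X, ∃ y ∈ Y, deltaDist x y ≤ c)
    (h2 : ∀ y ∈ Y, ∃ x ∈ X, deltaDist x y ≤ c) :
    deltaH X Y < ε := by
  have s1 : (⨆ x : X, ⨅ y : Y, deltaDist (x : Config d) (y : Config d)) ≤ c := by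
    apply Real.iSup_le _ hc
    intro x
    obtain ⟨y, hy, hd⟩ := h1 x x.2
    exact le_trans (ciInf_le (bddBelow_dist _ _) (⟨y, hy⟩ : Y)) hd
  have s2 : (⨆ y : Y, ⨅ x : X, deltaDist (x : Config d) (y : Config d)) ≤ c := by
    apply Real.iSup_le _ hc
    intro y
    obtain ⟨x, hx, hd⟩ := h2 y y.2
    refine le_trans (ciInf_le ?_ (⟨x, hx⟩ : X)) hd
    exact ⟨0, by rintro r ⟨x', rfl⟩; exact deltaDist_nonneg _ _⟩
  exact lt_of_le_of_lt (max_le s1 s2) hcε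

lemma close_of_deltaH_lt₁ {d : ℕ} {X Y : Set (Config d)} {ε : ℝ}
    (hY : Y.Nonempty) (h : deltaH X Y < ε) :
    ∀ x ∈ X, ∃ y ∈ Y, deltaDist x y < ε := by
  intro x hx
  have hYne : Nonempty Y := hY.to_subtype
  have hub : BddAbove (Set.range fun x : X => ⨅ y : Y, deltaDist (x : Config d) (y : Config d)) := by
    refine ⟨1, ?_⟩
    rintro r ⟨x', rfl⟩
    exact le_trans (ciInf_le (bddBelow_dist _ _) (Classical.arbitrary Y)) (deltaDist_le_one _ _)
  have h1 : (⨅ y : Y, deltaDist x (y : Config d)) < ε := by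
    have := le_ciSup hub (⟨x, hx⟩ : X)
    exact lt_of_le_of_lt (le_trans this (le_max_left _ _)) h
  obtain ⟨y, hy⟩ := exists_lt_of_ciInf_lt h1
  exact ⟨y, y.2, hy⟩

lemma close_of_deltaH_lt₂ {d : ℕ} {X Y : Set (Config d)} {ε : ℝ}
    (hX : X.Nonempty) (h : deltaH X Y < ε) :
    ∀ y ∈ Y, ∃ x ∈ X, deltaDist x y < ε := by
  intro y hy
  have hXne : Nonempty X := hX.to_subtype
  have hub : BddAbove (Set.range fun y : Y => ⨅ x : X, deltaDist (x : Config d) (y : Config d)) := by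
    refine ⟨1, ?_⟩
    rintro r ⟨y', rfl⟩
    refine le_trans (ciInf_le ?_ (Classical.arbitrary X)) (deltaDist_le_one _ _)
    exact ⟨0, by rintro r ⟨x', rfl⟩; exact deltaDist_nonneg _ _⟩
  have h1 : (⨅ x : X, deltaDist (x : Config d) y) < ε := by
    have := le_ciSup hub (⟨y, hy⟩ : Y)
    exact lt_of_le_of_lt (le_trans this (le_max_right _ _)) h
  obtain ⟨x, hxlt⟩ := exists_lt_of_ciInf_lt h1
  exact ⟨x, x.2, hxlt⟩

-- XofF is closed and invariant
lemma XofF_invariant {d : ℕ} (A : Finset ℤ) (F : Set (Finset (ZD d) × (ZD d → ℤ))) :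
    ∀ u : ZD d, ∀ x ∈ XofF A F, shiftMap u x ∈ XofF A F := by
  intro u x hx
  refine ⟨fun v => hx.1 (u + v), fun q hq happ => hx.2 q hq ?_⟩
  obtain ⟨w, hw⟩ := happ
  exact ⟨u + w, fun v hv => by rw [add_assoc]; exact hw v hv⟩

lemma XofF_closed {d : ℕ} (A : Finset ℤ) (F : Set (Finset (ZD d) × (ZD d → ℤ))) :
    IsDeltaClosed (XofF A F) := by
  intro x hx
  rw [mem_deltaClosure_iff] at hx
  constructor
  · intro v
    obtain ⟨a, ha, hag⟩ := hx (normInf v)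
    rw [hag v le_rfl]
    exact ha.1 v
  · rintro q hq ⟨u, hu⟩
    obtain ⟨a, ha, hag⟩ := hx (q.1.sup (fun v => normInf (u + v)))
    refine ha.2 q hq ⟨u, fun v hv => ?_⟩
    rw [← hag (u + v) (Finset.le_sup (f := fun v => normInf (u + v)) hv)]
    exact hu v hv

-- the ball of radius N as a Finset
noncomputable def ballF (d N : ℕ) : Finset (ZD d) := Fintype.piFinset (fun _ => Finset.Icc (-(N:ℤ)) N)

lemma mem_ballF {d N : ℕ} {n : ZD d} : n ∈ ballF d N ↔ normInf n ≤ N := by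
  rw [ballF, Fintype.mem_piFinset, normInf, Finset.sup_le_iff]
  constructor
  · intro h i _
    have := h i
    rw [Finset.mem_Icc] at this
    omega
  · intro h i
    have := h i (Finset.mem_univ i)
    rw [Finset.mem_Icc]
    omega

-- patterns over alphabet A supported on U
open Classical in
noncomputable def patFinset {d : ℕ} (A : Finset ℤ) (U : Finset (ZD d)) : Finset (ZD d → ℤ) :=
  (Fintype.piFinset (fun _ : U => A)).image (fun f v => if h : v ∈ U then f ⟨v, h⟩ else 0)

lemma restrict_mem_patFinset {d : ℕ} {A : Finset ℤ} {U : Finset (ZD d)} {z : Config d}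
    (hz : ∀ v ∈ U, z v ∈ A) :
    (fun v => if v ∈ U then z v else 0) ∈ patFinset A U := by
  classical
  rw [patFinset]
  apply Finset.mem_image.mpr
  refine ⟨fun v : U => z v.1, ?_, ?_⟩
  · rw [Fintype.mem_piFinset]
    exact fun v => hz v.1 v.2
  · funext v
    by_cases h : v ∈ U <;> simp [h]

open Classical in
/-- The forbidden patterns for the `N`-th SFT approximation of `X`. -/
noncomputable def badF (d N : ℕ) (A : Finset ℤ) (X : Set (Config d)) :
    Finset (Finset (ZD d) × (ZD d → ℤ)) :=
  ((patFinset A (ballF d N)).filter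
    (fun p => ¬ ∃ x ∈ X, ∀ v ∈ ballF d N, x v = p v)).image (fun p => (ballF d N, p))

noncomputable def ZN (d N : ℕ) (A : Finset ℤ) (X : Set (Config d)) : Set (Config d) :=
  XofF A ((badF d N A X : Finset _) : Set _)

lemma subset_ZN {d N : ℕ} {A : Finset ℤ} {X : Set (Config d)}
    (hA : ∀ x ∈ X, ∀ v : ZD d, x v ∈ A)
    (hinv : ∀ u : ZD d, ∀ x ∈ X, shiftMap u x ∈ X) :
    X ⊆ ZN d N A X := by
  classical
  intro x hx
  refine ⟨hA x hx, ?_⟩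
  rintro q hq ⟨u, hu⟩
  rw [Finset.mem_coe, badF, Finset.mem_image] at hq
  obtain ⟨p, hp, hpq⟩ := hq
  rw [Finset.mem_filter] at hp
  apply hp.2
  refine ⟨shiftMap u x, hinv u x hx, fun v hv => ?_⟩
  have h1 : q.1 = ballF d N := by rw [← hpq]
  have h2 : q.2 = p := by rw [← hpq]
  rw [shiftMap]
  rw [h1] at hu
  rw [← h2]
  exact hu v hv

lemma ZN_approx {d N : ℕ} {A : Finset ℤ} {X : Set (Config d)} {z : Config d}
    (hz : z ∈ ZN d N A X) : ∃ x ∈ X, agreeOn N z x := by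
  classical
  set pz : ZD d → ℤ := fun v => if v ∈ ballF d N then z v else 0 with hpz
  have hmem : pz ∈ patFinset A (ballF d N) :=
    restrict_mem_patFinset (fun v _ => hz.1 v)
  by_cases hex : ∃ x ∈ X, ∀ v ∈ ballF d N, x v = pz v
  · obtain ⟨x, hx, hagr⟩ := hex
    refine ⟨x, hx, fun n hn => ?_⟩
    have hb : n ∈ ballF d N := mem_ballF.mpr hn
    rw [hagr n hb, hpz]
    simp [hb]
  · exfalso
    apply hz.2 (ballF d N, pz)
    · rw [Finset.mem_coe, badF, Finset.mem_image]
      refine ⟨pz, ?_, rfl⟩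
      rw [Finset.mem_filter]
      exact ⟨hmem, hex⟩
    · refine ⟨0, fun v hv => ?_⟩
      rw [zero_add, hpz]
      simp [hv]
/-- A transitive shift of maximality type 1 which is not of finite type is
isolated in the space `T^d` of transitive shifts iff it is contained in a shift of
finite type `Z` such that `Z \ X` is not dense in `Z`. -/
theorem transitive_type_one_isolated_iff
    (d : ℕ) (hd : 1 ≤ d) (X : Set (Config d)) (hX : IsTransitive X)
    (htype : ∃! M : Set (Config d), IsMaximalSubsystem M X) (hnsft : ¬ IsSFT X) :
    IsolatedIn {Y : Set (Config d) | IsTransitive Y} X ↔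
      ∃ Z : Set (Config d), IsShift Z ∧ IsSFT Z ∧ X ⊆ Z ∧
        ¬ Z ⊆ deltaClosure (Z \ X) := by
  classical
  obtain ⟨⟨hXne, ⟨A, hA⟩, hXcl, hXinv⟩, t, htX, htdense⟩ := id hX
  constructor
  · rintro ⟨-, ε, hε, hiso⟩
    by_contra hno
    push_neg at hno
    obtain ⟨N, hN⟩ := exists_two_zpow_lt ε hε
    set Z := ZN d N A X with hZdef
    have hXZ : X ⊆ Z := subset_ZN hA hXinv
    have hZshift : IsShift Z :=
      ⟨hXne.mono hXZ, ⟨A, fun z hz v => hz.1 v⟩, XofF_closed _ _, XofF_invariant _ _⟩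
    have hZsft : IsSFT Z := ⟨A, badF d N A X, rfl⟩
    have hdense := hno Z hZshift hZsft hXZ
    -- finite net of X
    set rmap : Config d → ({ v // v ∈ ballF d N } → ℤ) := fun x v => x v.1 with hrmap
    have hfin : (rmap '' X).Finite := by
      apply Set.Finite.subset (Set.Finite.pi (fun _ : { v // v ∈ ballF d N } =>
        A.finite_toSet))
      rintro f ⟨x, hx, rfl⟩
      intro v _
      exact hA x hx v.1
    have hUex : ∀ f : ({ v // v ∈ ballF d N } → ℤ), ∃ u : ZD d,
        f ∈ rmap '' X → ∃ x ∈ X, rmap x = f ∧ agreeOn N x (shiftMap u t) := by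
      intro f
      by_cases hf : f ∈ rmap '' X
      · obtain ⟨x, hx, rfl⟩ := hf
        obtain ⟨a, ⟨u, rfl⟩, hag⟩ := mem_deltaClosure_iff.mp (htdense hx) N
        exact ⟨u, fun _ => ⟨x, hx, rfl, hag⟩⟩
      · exact ⟨0, fun h => absurd h hf⟩
    choose U hU using hUex
    set K := N + (hfin.toFinset.sup fun f => normInf (U f)) with hK
    -- choose w in Z \ X close to t
    obtain ⟨w, hwZX, hagw⟩ := mem_deltaClosure_iff.mp (hdense (hXZ htX)) K
    set Y := deltaClosure (orbit w) with hYdef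
    have horbinv : ∀ u : ZD d, ∀ a ∈ orbit w, shiftMap u a ∈ orbit w := by
      rintro u a ⟨v, rfl⟩
      exact ⟨v + u, shiftMap_comp u v w⟩
    have horbZ : orbit w ⊆ Z := by
      rintro a ⟨v, rfl⟩
      exact XofF_invariant _ _ v w hwZX.1
    have hYZ : Y ⊆ Z := fun y hy => XofF_closed _ _ (deltaClosure_mono horbZ hy)
    have hwY : w ∈ Y := subset_deltaClosure _ ⟨0, (shiftMap_zero w).symm⟩
    have hYtrans : IsTransitive Y := by
      refine ⟨⟨⟨w, hwY⟩, ⟨A, fun y hy v => (hYZ hy).1 v⟩, deltaClosure_isClosed _,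
        deltaClosure_invariant horbinv⟩, w, hwY, subset_rfl⟩
    have hYclose : deltaH X Y < ε := by
      refine deltaH_lt (c := (2:ℝ) ^ (-(N+1:ℤ))) (by positivity)
        (lt_trans (zpow_lt_zpow_right₀ one_lt_two (by omega)) hN) ?_ ?_
      · intro x hx
        obtain ⟨x', hx', hfx', hag'⟩ := hU (rmap x) ⟨x, hx, rfl⟩
        refine ⟨shiftMap (U (rmap x)) w, subset_deltaClosure _ ⟨U (rmap x), rfl⟩, ?_⟩
        apply dist_le_of_agree
        intro n hn
        have h1 : x n = x' n := by
          have := congrFun hfx' ⟨n, mem_ballF.mpr hn⟩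
          exact this.symm
        have h2 : x' n = t (U (rmap x) + n) := hag' n hn
        have h3 : t (U (rmap x) + n) = w (U (rmap x) + n) := by
          apply hagw
          refine le_trans (normInf_add_le _ _) ?_
          have : normInf (U (rmap x)) ≤ hfin.toFinset.sup fun f => normInf (U f) :=
            Finset.le_sup (f := fun f => normInf (U f))
              (hfin.mem_toFinset.mpr ⟨x, hx, rfl⟩)
          omega
        rw [h1, h2, h3]
        rfl
      · intro y hy
        obtain ⟨x, hx, hag⟩ := ZN_approx (hYZ hy)
        exact ⟨x, hx, dist_le_of_agree (fun n hn => (hag n hn).symm)⟩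
    have := hiso Y hYtrans hYclose
    rw [this] at hwY
    exact hwZX.2 hwY
  · rintro ⟨Z, hZshift, ⟨AZ, F, hZF⟩, hXZ, hnd⟩
    obtain ⟨M, ⟨⟨hMne, hMsub, hMcl, hMinv⟩, hMneq, hMmax⟩, -⟩ := htype
    -- a witness z0 in Z far from Z \ X
    obtain ⟨z0, hz0Z, hz0nc⟩ := Set.not_subset.mp hnd
    have hz0far : ∃ ε0 : ℝ, 0 < ε0 ∧ ∀ a ∈ Z \ X, ¬ deltaDist z0 a < ε0 := by
      simp only [deltaClosure, Set.mem_setOf_eq] at hz0nc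
      push_neg at hz0nc
      obtain ⟨ε0, hε0, h⟩ := hz0nc
      exact ⟨ε0, hε0, fun a ha hlt => absurd hlt (not_lt.mpr (h a ha))⟩
    obtain ⟨ε0, hε0, hz0far⟩ := hz0far
    have hz0X : z0 ∈ X := by
      by_contra h
      exact hz0far z0 ⟨hz0Z, h⟩ (by rw [deltaDist_self]; exact hε0)
    -- a witness x* in X far from M
    obtain ⟨xs, hxsX, hxsM⟩ := Set.exists_of_ssubset (ssubset_of_subset_of_ne hMsub hMneq)
    have hxsfar : ∃ ε1 : ℝ, 0 < ε1 ∧ ∀ m ∈ M, ¬ deltaDist xs m < ε1 := by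
      have : xs ∉ deltaClosure M := fun h => hxsM (hMcl h)
      simp only [deltaClosure, Set.mem_setOf_eq] at this
      push_neg at this
      obtain ⟨ε1, hε1, h⟩ := this
      exact ⟨ε1, hε1, fun m hm hlt => absurd hlt (not_lt.mpr (h m hm))⟩
    obtain ⟨ε1, hε1, hxsfar⟩ := hxsfar
    -- choose N
    obtain ⟨N0, hN0⟩ := exists_two_zpow_lt ε0 hε0
    obtain ⟨N1, hN1⟩ := exists_two_zpow_lt ε1 hε1
    set RF := F.sup (fun q => q.1.sup normInf) with hRF
    set N := max (max N0 N1) RF with hNdef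
    have hNε0 : (2:ℝ) ^ (-(N:ℤ)) < ε0 :=
      lt_of_le_of_lt (zpow_le_zpow_right₀ one_le_two (by omega)) hN0
    have hNε1 : (2:ℝ) ^ (-(N:ℤ)) < ε1 :=
      lt_of_le_of_lt (zpow_le_zpow_right₀ one_le_two (by omega)) hN1
    refine ⟨hX, (2:ℝ) ^ (-(N:ℤ)), by positivity, ?_⟩
    intro Y hYmem hYd
    obtain ⟨⟨hYne, -, hYcl, hYinv⟩, ty, htyY, htydense⟩ := hYmem
    have H1 : ∀ y ∈ Y, ∃ x ∈ X, deltaDist x y < (2:ℝ) ^ (-(N:ℤ)) :=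
      close_of_deltaH_lt₂ hXne hYd
    have H2 : ∀ x ∈ X, ∃ y ∈ Y, deltaDist x y < (2:ℝ) ^ (-(N:ℤ)) :=
      close_of_deltaH_lt₁ hYne hYd
    -- Y is contained in Z
    have hYZ : Y ⊆ Z := by
      intro y hy
      rw [hZF]
      constructor
      · intro v
        obtain ⟨x, hx, hdx⟩ := H1 (shiftMap v y) (hYinv v y hy)
        have hag := agree_of_dist_lt hdx
        have h0 : normInf (0 : ZD d) ≤ N := by
          apply Finset.sup_le
          intro i _
          simp
        have hxZ := hXZ hx
        rw [hZF] at hxZ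
        have hyx : y v = x 0 := by
          rw [hag 0 h0]
          simp [shiftMap]
        rw [hyx]
        exact hxZ.1 0
      · rintro q hq ⟨u, hu⟩
        obtain ⟨x, hx, hdx⟩ := H1 (shiftMap u y) (hYinv u y hy)
        have hag := agree_of_dist_lt hdx
        have hxZ := hXZ hx
        rw [hZF] at hxZ
        apply hxZ.2 q hq
        refine ⟨0, fun v hv => ?_⟩
        have hvN : normInf v ≤ N := by
          have h1 : normInf v ≤ q.1.sup normInf := Finset.le_sup (f := normInf) hv
          have h2 : q.1.sup normInf ≤ RF :=
            Finset.le_sup (f := fun q => q.1.sup normInf) (Finset.mem_coe.mp hq)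
          omega
        rw [zero_add, hag v hvN]
        exact hu v hv
    -- the transitive point of Y lies in X
    have htyX : ty ∈ X := by
      by_contra hty
      have horb : ∀ a ∈ orbit ty, a ∈ Z \ X := by
        rintro a ⟨u, rfl⟩
        refine ⟨hYZ (hYinv u ty htyY), fun haX => hty ?_⟩
        have := hXinv (-u) _ haX
        rwa [shiftMap_comp, add_neg_cancel, shiftMap_zero] at this
      obtain ⟨y0, hy0Y, hdy0⟩ := H2 z0 hz0X
      have hagy0 := agree_of_dist_lt hdy0
      obtain ⟨a, haorb, hag2⟩ := mem_deltaClosure_iff.mp (htydense hy0Y) N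
      have hagz0a : agreeOn N z0 a := fun n hn => (hagy0 n hn).trans (hag2 n hn)
      exact hz0far a (horb a haorb) (lt_trans (dist_lt_of_agree hagz0a) hNε0)
    have horbX : orbit ty ⊆ X := by
      rintro a ⟨u, rfl⟩
      exact hXinv u ty htyX
    have hYsubX : Y ⊆ X := fun y hy => hXcl (deltaClosure_mono horbX (htydense hy))
    -- conclude Y = X
    by_contra hYneX
    have hYM : Y ⊆ M := by
      by_contra hYnM
      obtain ⟨y1, hy1Y, hy1M⟩ := Set.not_subset.mp hYnM
      have hW : IsSubsystem (Y ∪ M) X := by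
        refine ⟨hYne.mono Set.subset_union_left, Set.union_subset hYsubX hMsub, ?_, ?_⟩
        · intro x hx
          rcases deltaClosure_union Y M hx with h | h
          · exact Or.inl (hYcl h)
          · exact Or.inr (hMcl h)
        · rintro u z (hz | hz)
          · exact Or.inl (hYinv u z hz)
          · exact Or.inr (hMinv u z hz)
      have hMW : M ⊂ Y ∪ M := by
        refine ⟨Set.subset_union_right, fun hsub => hy1M (hsub (Or.inl hy1Y))⟩
      have hWX := hMmax (Y ∪ M) hW hMW
      have htW : t ∈ Y ∪ M := hWX ▸ htX
      rcases htW with htY | htM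
      · apply hYneX
        have hXY : X ⊆ Y := by
          intro x hx
          have horbY : orbit t ⊆ Y := by
            rintro a ⟨u, rfl⟩
            exact hYinv u t htY
          exact hYcl (deltaClosure_mono horbY (htdense hx))
        exact Set.Subset.antisymm hYsubX hXY
      · apply hMneq
        have hXM : X ⊆ M := by
          intro x hx
          have horbM : orbit t ⊆ M := by
            rintro a ⟨u, rfl⟩
            exact hMinv u t htM
          exact hMcl (deltaClosure_mono horbM (htdense hx))
        exact Set.Subset.antisymm hMsub hXM
    obtain ⟨ys, hysY, hdys⟩ := H2 xs hxsX
    exact hxsfar ys (hYM hysY) (lt_trans hdys hNε1)
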